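/- For any bipartite pure state |ψ⟩_AB with Schmidt-like decomposition |ψ⟩ = Σ_{i=1}^{d_A} √p_i |i⟩_A |u_i⟩_B in the fixed incoherent basis of A (p_i ≥ 0, Σ p_i = 1, {|u_i⟩} unit vectors), the l1 IQ coherence equals C^{A|B}_{l1}(ψ_AB) = (Σ_i √p_i)² − 1, and consequently C^{A|B}_{l1}(ψ_AB) ≤ d_A − 1. -/

import Mathlib

open scoped BigOperators ComplexOrder Kronecker

/-- Trace norm: `‖P‖_tr = Tr √(Pᴴ P)`. -/
noncomputable def traceNorm {n : Type*} [Fintype n] [DecidableEq n] (P : Matrix n n ℂ) : ℝ :=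
  (((Matrix.posSemidef_conjTranspose_mul_self P).1.eigenvectorUnitary : Matrix n n ℂ) *
    Matrix.diagonal (((↑) : ℝ → ℂ) ∘ (Real.sqrt ·) ∘ (Matrix.posSemidef_conjTranspose_mul_self P).1.eigenvalues) *
    (star (Matrix.posSemidef_conjTranspose_mul_self P).1.eigenvectorUnitary : Matrix n n ℂ)).trace.re

/-- The B-blocks of an operator on H_A ⊗ H_B. -/
def blockB {A B : Type*} (Q : Matrix (A × B) (A × B) ℂ) (i j : A) : Matrix B B ℂ :=
  fun b b' => Q (i, b) (j, b')

/-- l1 norm of IQ coherence: C^{A|B}_{l1}(ρ) = Σ_{i≠j} ‖ρ^B_{ij}‖_tr. -/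
noncomputable def CIQl1 {A B : Type*} [Fintype A] [Fintype B] [DecidableEq A] [DecidableEq B]
    (ρ : Matrix (A × B) (A × B) ℂ) : ℝ :=
  ∑ i, ∑ j, if i = j then 0 else traceNorm (blockB ρ i j)

section AuxRankOne
open scoped Matrix
open scoped MatrixOrder

lemma traceNorm_eq_sqrt {n : Type*} [Fintype n] [DecidableEq n] (P : Matrix n n ℂ) :
    traceNorm P = (CFC.sqrt (Pᴴ * P)).trace.re := by
  rw [CFC.sqrt_eq_real_sqrt _ (Matrix.posSemidef_conjTranspose_mul_self P).nonneg, cfcₙ_eq_cfc,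
    (Matrix.posSemidef_conjTranspose_mul_self P).1.cfc_eq]
  rfl


lemma posSemidef_vecMulVec_star {n : Type*} [Fintype n] [DecidableEq n] (y : n → ℂ) :
    (Matrix.vecMulVec y (star y)).PosSemidef := by
  have h : Matrix.vecMulVec y (star y)
      = (Matrix.replicateRow Unit (star y))ᴴ * Matrix.replicateRow Unit (star y) := by
    ext b b'
    simp [Matrix.mul_apply, Matrix.vecMulVec_apply, Matrix.replicateRow_apply,
      Matrix.conjTranspose_apply]
  exact h ▸ Matrix.posSemidef_conjTranspose_mul_self _

lemma traceNorm_rankOne {n : Type*} [Fintype n] [DecidableEq n] (v w : n → ℂ) :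
    traceNorm (Matrix.vecMulVec v (star w)) =
      Real.sqrt (∑ b, Complex.normSq (v b)) * Real.sqrt (∑ b, Complex.normSq (w b)) := by
  set P := Matrix.vecMulVec v (star w) with hP
  have hsw : (0:ℝ) ≤ ∑ b, Complex.normSq (w b) :=
    Finset.sum_nonneg fun b _ => Complex.normSq_nonneg _
  have hsv : (0:ℝ) ≤ ∑ b, Complex.normSq (v b) :=
    Finset.sum_nonneg fun b _ => Complex.normSq_nonneg _
  have hPHP : ∀ b b', (Pᴴ * P) b b'
      = ((∑ a, Complex.normSq (v a) : ℝ) : ℂ) * (w b * (starRingEnd ℂ) (w b')) := by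
    intro b b'
    simp only [Matrix.mul_apply, Matrix.conjTranspose_apply, hP, Matrix.vecMulVec_apply,
      Pi.star_apply, RCLike.star_def, map_mul, Complex.conj_conj]
    push_cast
    rw [Finset.sum_mul]
    refine Finset.sum_congr rfl fun a _ => ?_
    rw [Complex.normSq_eq_conj_mul_self]
    ring
  by_cases hw : Real.sqrt (∑ b, Complex.normSq (w b)) = 0
  · have hw0 : w = 0 := by
      have h0 := (Real.sqrt_eq_zero hsw).mp hw
      funext b
      have hb := (Finset.sum_eq_zero_iff_of_nonneg
        (fun b _ => Complex.normSq_nonneg (w b))).mp h0 b (Finset.mem_univ b)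
      simpa using Complex.normSq_eq_zero.mp hb
    have hP0 : P = 0 := by
      ext a b; simp [hP, hw0, Matrix.vecMulVec_apply]
    rw [hw, mul_zero]
    rw [traceNorm_eq_sqrt]
    have h0 : CFC.sqrt (Pᴴ * P) = 0 := by
      simp [hP0]
    simp [h0]
  · set nw := Real.sqrt (∑ b, Complex.normSq (w b)) with hnw
    set nv := Real.sqrt (∑ b, Complex.normSq (v b)) with hnv
    set c : ℝ := nv / nw with hc
    have hc0 : 0 ≤ c := div_nonneg (Real.sqrt_nonneg _) (Real.sqrt_nonneg _)
    set y : n → ℂ := fun b => (Real.sqrt c : ℂ) * w b with hy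
    set S := Matrix.vecMulVec y (star y) with hS
    have hSent : ∀ b b', S b b' = (c:ℂ) * (w b * (starRingEnd ℂ) (w b')) := by
      intro b b'
      simp only [hS, Matrix.vecMulVec_apply, Pi.star_apply, RCLike.star_def, hy, map_mul,
        Complex.conj_ofReal]
      rw [show ((Real.sqrt c : ℝ) : ℂ) * w b * (((Real.sqrt c : ℝ):ℂ) * (starRingEnd ℂ) (w b'))
        = (((Real.sqrt c * Real.sqrt c : ℝ)) : ℂ) * (w b * (starRingEnd ℂ) (w b')) by push_cast; ring,
        Real.mul_self_sqrt hc0]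
    have hSsq : S ^ 2 = Pᴴ * P := by
      ext b b'
      rw [pow_two, hPHP b b']
      simp only [Matrix.mul_apply]
      simp only [hSent]
      have hnw2 : nw * nw = ∑ a, Complex.normSq (w a) := Real.mul_self_sqrt hsw
      have hnv2 : nv * nv = ∑ a, Complex.normSq (v a) := Real.mul_self_sqrt hsv
      have key : ∑ a, (c:ℂ) * (w b * (starRingEnd ℂ) (w a)) * ((c:ℂ) * (w a * (starRingEnd ℂ) (w b')))
          = (c:ℂ)^2 * ((∑ a, Complex.normSq (w a) : ℝ):ℂ) * (w b * (starRingEnd ℂ) (w b')) := by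
        have h1 : ∀ a : n, (c:ℂ) * (w b * (starRingEnd ℂ) (w a)) * ((c:ℂ) * (w a * (starRingEnd ℂ) (w b')))
            = (c:ℂ)^2 * (w a * (starRingEnd ℂ) (w a)) * (w b * (starRingEnd ℂ) (w b')) := by
          intro a; ring
        simp_rw [h1, ← Finset.sum_mul, ← Finset.mul_sum, Complex.mul_conj]
        push_cast
        ring
      rw [key]
      congr 1
      rw [show ((c:ℂ))^2 = (((c^2 : ℝ)):ℂ) by push_cast; ring, ← Complex.ofReal_mul]
      congr 1
      rw [hc, div_pow, ← hnv2, ← hnw2]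
      field_simp [pow_two]
    have hsqrt : CFC.sqrt (Pᴴ * P) = S :=
      CFC.sqrt_unique (by rw [← pow_two]; exact hSsq) (posSemidef_vecMulVec_star y).nonneg
    rw [traceNorm_eq_sqrt]
    rw [hsqrt]
    have htr : S.trace = ((c * ∑ b, Complex.normSq (w b) : ℝ) : ℂ) := by
      unfold Matrix.trace
      simp only [Matrix.diag_apply, hSent]
      push_cast
      rw [Finset.mul_sum]
      refine Finset.sum_congr rfl fun b _ => ?_
      rw [Complex.mul_conj]
    rw [htr, Complex.ofReal_re, hc]
    rw [← Real.mul_self_sqrt hsw, ← hnw]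
    field_simp

end AuxRankOne

/-- for a pure state |ψ⟩ = Σ_i √p_i |i⟩_A |u_i⟩_B,
C^{A|B}_{l1}(ψ) = (Σ_i √p_i)² − 1, and hence C^{A|B}_{l1}(ψ) ≤ d_A − 1. -/
theorem CIQl1_pure {A B : Type*} [Fintype A] [Fintype B] [DecidableEq A] [DecidableEq B]
    (p : A → ℝ) (hp : ∀ i, 0 ≤ p i) (hsum : ∑ i, p i = 1)
    (u : A → B → ℂ) (hu : ∀ i, ∑ b, Complex.normSq (u i b) = 1) :
    CIQl1 (Matrix.vecMulVec (fun x : A × B => (Real.sqrt (p x.1) : ℂ) * u x.1 x.2)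
        (star fun x : A × B => (Real.sqrt (p x.1) : ℂ) * u x.1 x.2)) =
      (∑ i, Real.sqrt (p i)) ^ 2 - 1 ∧
    CIQl1 (Matrix.vecMulVec (fun x : A × B => (Real.sqrt (p x.1) : ℂ) * u x.1 x.2)
        (star fun x : A × B => (Real.sqrt (p x.1) : ℂ) * u x.1 x.2)) ≤
      (Fintype.card A : ℝ) - 1 := by
  set ψ : A × B → ℂ := fun x => (Real.sqrt (p x.1) : ℂ) * u x.1 x.2 with hψ
  set ρ := Matrix.vecMulVec ψ (star ψ) with hρ
  have hblock : ∀ i j : A, blockB ρ i j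
      = Matrix.vecMulVec (fun b => (Real.sqrt (p i) : ℂ) * u i b)
          (star fun b => (Real.sqrt (p j) : ℂ) * u j b) := by
    intro i j
    ext b b'
    simp [blockB, hρ, Matrix.vecMulVec_apply, hψ]
  have hnormsq : ∀ i : A, ∑ b, Complex.normSq ((Real.sqrt (p i) : ℂ) * u i b) = p i := by
    intro i
    simp only [Complex.normSq_mul, Complex.normSq_ofReal, ← Finset.mul_sum, hu i, mul_one,
      Real.mul_self_sqrt (hp i)]
  have hTN : ∀ i j : A, traceNorm (blockB ρ i j) = Real.sqrt (p i) * Real.sqrt (p j) := by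
    intro i j
    rw [hblock i j, traceNorm_rankOne, hnormsq, hnormsq]
  have hdiag : ∑ i : A, Real.sqrt (p i) * Real.sqrt (p i) = 1 := by
    rw [← hsum]
    exact Finset.sum_congr rfl fun i _ => Real.mul_self_sqrt (hp i)
  have hmain : CIQl1 ρ = (∑ i, Real.sqrt (p i)) ^ 2 - 1 := by
    unfold CIQl1
    simp_rw [hTN]
    have h1 : ∀ i j : A, (if i = j then (0:ℝ) else Real.sqrt (p i) * Real.sqrt (p j))
        = Real.sqrt (p i) * Real.sqrt (p j)
            - (if j = i then Real.sqrt (p i) * Real.sqrt (p j) else 0) := by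
      intro i j
      by_cases h : i = j <;> simp [h, eq_comm]
    simp_rw [h1, Finset.sum_sub_distrib, Finset.sum_ite_eq', Finset.mem_univ, if_true,
      ← Finset.mul_sum, ← Finset.sum_mul, hdiag, pow_two]
  refine ⟨hmain, ?_⟩
  rw [hmain]
  have hCS : (∑ i, Real.sqrt (p i)) ^ 2 ≤ (Fintype.card A : ℝ) := by
    have := Finset.sum_mul_sq_le_sq_mul_sq Finset.univ (fun _ : A => (1:ℝ))
      (fun i => Real.sqrt (p i))
    simp only [one_mul, one_pow] at this
    calc (∑ i, Real.sqrt (p i)) ^ 2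
        ≤ (∑ _i : A, (1:ℝ)) * ∑ i, Real.sqrt (p i) ^ 2 := this
      _ = (Fintype.card A : ℝ) := by
          simp only [Finset.sum_const, Finset.card_univ, nsmul_eq_mul, mul_one]
          rw [show ∑ i, Real.sqrt (p i) ^ 2 = ∑ i, p i from
            Finset.sum_congr rfl fun i _ => Real.sq_sqrt (hp i), hsum, mul_one]
  linarith
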